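/- In 𝔽_3((1/T)), let β = [T, T³, T⁹, ..., T^{3^n}, ...] be the continued fraction satisfying β = T + 1/β³. Then β satisfies β⁸ − T²β⁶ + β⁴ + 1 = 0; equivalently, γ = 1/β² satisfies γ⁴ + γ² − T²γ + 1 = 0. -/

import Mathlib

/-- In `𝔽₃((1/T))` (modelled as Laurent series in `X = 1/T`, so `T = X⁻¹`),
let `β = [T, T³, T⁹, ...]` be the element with `|β| = |T|` satisfying
`β = T + 1/β³`.  Then `β⁸ − T²β⁶ + β⁴ + 1 = 0`, and equivalently `γ = 1/β²`
satisfies `γ⁴ + γ² − T²γ + 1 = 0` (the Mills–Robbins quartic in `T²`). -/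
theorem beta_octic (T β : LaurentSeries (ZMod 3))
    (hT : T = ((PowerSeries.X : PowerSeries (ZMod 3)) : LaurentSeries (ZMod 3))⁻¹)
    (hβ0 : β ≠ 0) (hord : β.order = T.order)
    (hβ : β = T + 1 / β ^ 3) :
    β ^ 8 - T ^ 2 * β ^ 6 + β ^ 4 + 1 = 0 ∧
    (1 / β ^ 2) ^ 4 + (1 / β ^ 2) ^ 2 - T ^ 2 * (1 / β ^ 2) + 1 = 0 := by
  have h3 : (3 : LaurentSeries (ZMod 3)) = 0 := by
    have h := map_ofNat (algebraMap (ZMod 3) (LaurentSeries (ZMod 3))) 3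
    rw [← h, show (3 : ZMod 3) = 0 by decide, map_zero]
  have key : β ^ 4 = T * β ^ 3 + 1 := by
    have h := hβ
    field_simp at h
    linear_combination h
  have main : β ^ 8 - T ^ 2 * β ^ 6 + β ^ 4 + 1 = 0 := by
    linear_combination (β ^ 4 + T * β ^ 3 + 2) * key + (T * β ^ 3 + 1) * h3
  refine ⟨main, ?_⟩
  have h8 : β ^ 8 ≠ 0 := pow_ne_zero _ hβ0
  field_simp
  linear_combination main
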